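/- For every integer m ≥ 1, the double integral over (t₀,t₁) ∈ [0,1]² of log(3 + |1 + z₀ + ⋯ + z₀^{2m−1}|² + |1 + z₁ + ⋯ + z₁^{m²−1}|²), where z₀ = e^{−2πi t₀} and z₁ = e^{−2πi t₁}, is at most log(8(3+√5)) = 4 log 2 + log((3+√5)/2). -/

import Mathlib

open Real Complex

noncomputable section

namespace Stmt14Aux

open MeasureTheory

def z (t : ℝ) : ℂ := Complex.exp (-(2 * Real.pi * Complex.I) * (t : ℂ))
def a (t : ℝ) : ℝ := ‖1 - z t‖ ^ 2


lemma abs_z (t : ℝ) : ‖z t‖ = 1 := by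
  rw [z, Complex.norm_exp]; norm_num

lemma z_re (t : ℝ) : (z t).re = Real.cos (2 * Real.pi * t) := by
  rw [z, Complex.exp_re]
  simp [Real.cos_neg]

lemma z_im (t : ℝ) : (z t).im = - Real.sin (2 * Real.pi * t) := by
  rw [z, Complex.exp_im]
  simp [Real.sin_neg]

lemma a_eq (t : ℝ) : a t = 2 - 2 * Real.cos (2 * Real.pi * t) := by
  rw [a, Complex.sq_norm, Complex.normSq_apply]
  simp only [Complex.sub_re, Complex.sub_im, Complex.one_re, Complex.one_im, z_re, z_im]
  nlinarith [Real.sin_sq_add_cos_sq (2 * Real.pi * t)]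

lemma a_eq_sin (t : ℝ) : a t = 4 * Real.sin (Real.pi * t) ^ 2 := by
  rw [a_eq]
  have h : 2 * Real.pi * t = 2 * (Real.pi * t) := by ring
  rw [h, Real.cos_two_mul]
  nlinarith [Real.sin_sq_add_cos_sq (Real.pi * t)]

lemma a_nonneg (t : ℝ) : 0 ≤ a t := by rw [a]; positivity

lemma a_le_four (t : ℝ) : a t ≤ 4 := by
  rw [a_eq]
  nlinarith [Real.neg_one_le_cos (2 * Real.pi * t)]

lemma a_pos {t : ℝ} (ht : t ∈ Set.Ioo (0:ℝ) 1) : 0 < a t := by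
  rw [a_eq_sin]
  have h1 : 0 < Real.sin (Real.pi * t) := by
    apply Real.sin_pos_of_pos_of_lt_pi
    · exact mul_pos Real.pi_pos ht.1
    · nlinarith [Real.pi_pos, ht.2]
  positivity

lemma sum_sq_le {t : ℝ} (ht : t ∈ Set.Ioo (0:ℝ) 1) (n : ℕ) :
    ‖∑ j ∈ Finset.range n, z t ^ j‖ ^ 2 ≤ 4 / a t := by
  have ha := a_pos ht
  have hz1 : z t ≠ 1 := by
    intro h
    rw [a, h] at ha; simp at ha
  rw [geom_sum_eq hz1, norm_div]
  have h1 : ‖z t - 1‖ ^ 2 = a t := by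
    rw [a, ← norm_neg (1 - z t)]; ring_nf
  have h2 : ‖z t ^ n - 1‖ ≤ 2 := by
    calc ‖z t ^ n - 1‖ ≤ ‖z t ^ n‖ + ‖(1:ℂ)‖ := by
          exact norm_sub_le _ _
      _ = 2 := by rw [norm_pow, abs_z]; norm_num
  rw [div_pow, h1]
  gcongr

  nlinarith [h2, norm_nonneg (z t ^ n - 1)]



lemma log_bound {a b A B : ℝ} (ha : 0 < a) (ha4 : a ≤ 4) (hb : 0 < b) (hb4 : b ≤ 4)
    (hA0 : 0 ≤ A) (hA : A ≤ 4/a) (hB0 : 0 ≤ B) (hB : B ≤ 4/b) :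
    Real.log (3 + A + B) ≤ Real.log (16/5) + (Real.log (1+a) - Real.log a)
      + (Real.log (1+b) - Real.log b) := by
  have hAa : A * a ≤ 4 := by rwa [← le_div_iff₀ ha]
  have hBb : B * b ≤ 4 := by rwa [← le_div_iff₀ hb]
  have h1 : 3 + A + B ≤ 16/5 * ((1+a)/a) * ((1+b)/b) := by
    rw [show (16:ℝ)/5 * ((1+a)/a) * ((1+b)/b) = (16*(1+a)*(1+b))/(5*(a*b)) by
      field_simp]
    rw [le_div_iff₀ (by positivity)]
    nlinarith [mul_le_mul_of_nonneg_right hAa hb.le, mul_le_mul_of_nonneg_right hBb ha.le,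
      mul_nonneg (sub_nonneg.2 ha4) (sub_nonneg.2 hb4)]
  calc Real.log (3 + A + B) ≤ Real.log (16/5 * ((1+a)/a) * ((1+b)/b)) := by
        apply Real.log_le_log (by positivity) h1
    _ = Real.log (16/5) + (Real.log (1+a) - Real.log a) + (Real.log (1+b) - Real.log b) := by
        rw [Real.log_mul (by positivity) (by positivity),
           Real.log_mul (by positivity) (by positivity),
           Real.log_div (by positivity) ha.ne', Real.log_div (by positivity) hb.ne']

lemma int_cos : ∫ t in (0:ℝ)..1, Real.cos (2*Real.pi*t) = 0 := by
  have h : ∀ t : ℝ, Real.cos (2*Real.pi*t) = Real.cos (2*Real.pi*t) := fun _ => rfl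
  have := intervalIntegral.integral_comp_mul_left (a := 0) (b := 1) (fun x => Real.cos x)
    (c := 2*Real.pi) (by positivity)
  simp only [mul_zero, mul_one] at this
  rw [show (fun t => Real.cos (2*Real.pi*t)) = (fun t => Real.cos (2*Real.pi*t)) from rfl]
  calc (∫ t in (0:ℝ)..1, Real.cos (2*Real.pi*t)) = (2*Real.pi)⁻¹ • ∫ x in (0:ℝ)..(2*Real.pi), Real.cos x := this
    _ = 0 := by rw [integral_cos]; simp [Real.sin_two_pi]



lemma ii_log : IntervalIntegrable Real.log volume 0 (1/2) := by
  have hg : IntervalIntegrable (fun t : ℝ => 2 * t ^ (-(1/2) : ℝ)) volume 0 (1/2) :=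
    (intervalIntegral.intervalIntegrable_rpow' (by norm_num)).const_mul 2
  refine hg.mono_fun Real.measurable_log.aestronglyMeasurable ?_
  rw [Set.uIoc_of_le (by norm_num : (0:ℝ) ≤ 1/2)]
  refine (ae_restrict_iff' measurableSet_Ioc).2 (Filter.Eventually.of_forall fun x hx => ?_)
  have hx0 : 0 < x := hx.1
  have hx1 : x ≤ 1 := hx.2.trans (by norm_num)
  have h1 : Real.log x ≤ 0 := Real.log_nonpos hx0.le hx1
  have h2 : -Real.log x = 2 * Real.log (x ^ (-(1/2) : ℝ)) := by
    rw [Real.log_rpow hx0]; ring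
  have h3 : (0:ℝ) < x ^ (-(1/2) : ℝ) := Real.rpow_pos_of_pos hx0 _
  have h4 : Real.log (x ^ (-(1/2) : ℝ)) ≤ x ^ (-(1/2) : ℝ) :=
    (Real.log_le_sub_one_of_pos h3).trans (by linarith)
  simp only [Real.norm_eq_abs]
  rw [abs_of_nonpos h1, abs_of_pos (by positivity : (0:ℝ) < 2 * x ^ (-(1/2):ℝ))]
  linarith

lemma ii_log' {c d : ℝ} (h0 : 0 ≤ c) (hcd : c ≤ d) (h1 : d ≤ 1/2) :
    IntervalIntegrable Real.log volume c d := by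
  refine ii_log.mono_set' ?_
  rw [Set.uIoc_of_le hcd, Set.uIoc_of_le (by norm_num : (0:ℝ) ≤ 1/2)]
  exact Set.Ioc_subset_Ioc h0 h1

lemma int_log_quarter : ∫ t in (0:ℝ)..(1/4), Real.log t = (1/4) * Real.log (1/4) - 1/4 := by
  have h := intervalIntegral.integral_eq_sub_of_hasDerivAt_of_tendsto
    (f := fun t : ℝ => t * Real.log t - t) (f' := Real.log)
    (a := (0:ℝ)) (b := (1/4:ℝ)) (fa := (0:ℝ)) (fb := (1/4) * Real.log (1/4) - 1/4)
    (by norm_num) ?_ (ii_log' le_rfl (by norm_num) (by norm_num)) ?_ ?_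
  · rw [h]; ring
  · intro x hx
    exact ((Real.hasDerivAt_mul_log hx.1.ne').sub (hasDerivAt_id' x)).congr_deriv (by ring)
  · have h1 : Filter.Tendsto (fun t : ℝ => t * Real.log t) (nhdsWithin 0 (Set.Ioi 0)) (nhds 0) := by
      have := tendsto_log_mul_rpow_nhdsGT_zero (r := 1) one_pos
      simp only [Real.rpow_one] at this
      exact this.congr (fun x => mul_comm _ _)
    have h2 : Filter.Tendsto (fun t : ℝ => t) (nhdsWithin 0 (Set.Ioi 0)) (nhds 0) :=
      Filter.Tendsto.mono_left Filter.tendsto_id nhdsWithin_le_nhds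
    simpa using h1.sub h2
  · apply Filter.Tendsto.mono_left _ nhdsWithin_le_nhds
    have : ContinuousAt (fun t : ℝ => t * Real.log t - t) (1/4) := by
      exact ((continuousAt_id.mul (Real.continuousAt_log (by norm_num))).sub continuousAt_id)
    exact this



lemma pi_sq_lt : Real.pi^2 < 9.9226 := by nlinarith [Real.pi_lt_d2, Real.pi_pos]

lemma sin_lb1 {t : ℝ} (h0 : 0 < t) (h14 : t ≤ 1/4) :
    Real.pi * t * (1 - (Real.pi*t)^2/4) ≤ Real.sin (Real.pi * t) := by
  have h1 : 0 < Real.pi * t := mul_pos Real.pi_pos h0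
  have h2 : Real.pi * t ≤ 1 := by nlinarith [Real.pi_lt_d2]
  have h3 := Real.sin_gt_sub_cube h1
  nlinarith [h3]

lemma mem_sin {x : ℝ} (h0 : 0 ≤ x) (h2 : x ≤ Real.pi/2) :
    x ∈ Set.Icc (-(Real.pi/2)) (Real.pi/2) :=
  ⟨by nlinarith [Real.pi_pos], h2⟩

lemma sin_lb2 {t : ℝ} (h14 : 1/4 ≤ t) (h12 : t ≤ 1/2) :
    Real.sqrt 2 / 2 ≤ Real.sin (Real.pi * t) := by
  rw [← Real.sin_pi_div_four]
  apply Real.strictMonoOn_sin.monotoneOn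
    (mem_sin (by positivity) (by nlinarith [Real.pi_pos]))
    (mem_sin (by nlinarith [Real.pi_pos]) (by nlinarith [Real.pi_pos]))
    (by nlinarith [Real.pi_pos])

lemma sin_lb3 {t : ℝ} (h38 : 3/8 ≤ t) (h12 : t ≤ 1/2) :
    Real.sqrt (2 + Real.sqrt 2) / 2 ≤ Real.sin (Real.pi * t) := by
  have h : Real.sin (Real.pi * (3/8 : ℝ)) = Real.sqrt (2 + Real.sqrt 2) / 2 := by
    rw [show Real.pi * (3/8:ℝ) = Real.pi/2 - Real.pi/8 by ring, Real.sin_pi_div_two_sub,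
      Real.cos_pi_div_eight]
  rw [← h]
  apply Real.strictMonoOn_sin.monotoneOn
    (mem_sin (by nlinarith [Real.pi_pos]) (by nlinarith [Real.pi_pos]))
    (mem_sin (by nlinarith [Real.pi_pos]) (by nlinarith [Real.pi_pos]))
    (by nlinarith [Real.pi_pos])

lemma a_lb_mid {t : ℝ} (h14 : 1/4 ≤ t) (h12 : t ≤ 1/2) : 2 ≤ a t := by
  rw [a_eq_sin]
  have h := sin_lb2 h14 h12
  nlinarith [Real.sq_sqrt (show (0:ℝ) ≤ 2 by norm_num),
    Real.sqrt_nonneg (2:ℝ)]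

lemma a_lb_hi {t : ℝ} (h38 : 3/8 ≤ t) (h12 : t ≤ 1/2) : 2 + Real.sqrt 2 ≤ a t := by
  rw [a_eq_sin]
  have h := sin_lb3 h38 h12
  nlinarith [Real.sq_sqrt (show (0:ℝ) ≤ 2 + Real.sqrt 2 by positivity),
    Real.sqrt_nonneg (2 + Real.sqrt 2), Real.sqrt_nonneg (2:ℝ)]

lemma a_lb_low {t : ℝ} (h0 : 0 < t) (h14 : t ≤ 1/4) :
    4 * (Real.pi * t * (1 - (Real.pi*t)^2/4))^2 ≤ a t := by
  rw [a_eq_sin]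
  have h := sin_lb1 h0 h14
  have hq : 0 < Real.pi * t * (1 - (Real.pi*t)^2/4) := by
    have hle : Real.pi * t ≤ 0.7875 := by nlinarith [Real.pi_lt_d2]
    have h2 : (Real.pi*t)^2 < 1 := by nlinarith [mul_pos Real.pi_pos h0]
    have := mul_pos Real.pi_pos h0
    nlinarith
  nlinarith [h, hq]

lemma a_lb_sq {t : ℝ} (h0 : 0 < t) (h12 : t ≤ 1/2) : 4 * t^2 ≤ a t := by
  rcases le_or_gt t (1/4) with h | h
  · have h1 := a_lb_low h0 h
    have hu : (Real.pi*t)^2 ≤ 9.9226/16 := by nlinarith [pi_sq_lt, sq_nonneg t, mul_pos h0 h0]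
    have h3 : 1 ≤ Real.pi * (1 - (Real.pi*t)^2/4) := by
      nlinarith [hu, Real.pi_gt_d6, Real.pi_lt_d2]
    have h2 : t ≤ Real.pi * t * (1 - (Real.pi*t)^2/4) := by
      calc t = t * 1 := by ring
        _ ≤ t * (Real.pi * (1 - (Real.pi*t)^2/4)) := by
            exact mul_le_mul_of_nonneg_left h3 h0.le
        _ = Real.pi * t * (1 - (Real.pi*t)^2/4) := by ring
    nlinarith [h2, h0]
  · have := a_lb_mid h.le h12
    nlinarith

lemma cont_a : Continuous a := by
  have : Continuous z := Complex.continuous_exp.comp (continuous_const.mul Complex.continuous_ofReal)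
  exact (continuous_norm.comp (continuous_const.sub this)).pow 2

lemma ii_la_half : IntervalIntegrable (fun t => Real.log (a t)) volume 0 (1/2) := by
  have hg : IntervalIntegrable (fun t : ℝ => Real.log 4 + 2 * |Real.log t|) volume 0 (1/2) :=
    (intervalIntegrable_const).add (ii_log.abs.const_mul 2)
  refine hg.mono_fun' ((Real.measurable_log.comp cont_a.measurable).aestronglyMeasurable) ?_
  rw [Set.uIoc_of_le (by norm_num : (0:ℝ) ≤ 1/2)]
  refine (ae_restrict_iff' measurableSet_Ioc).2 (Filter.Eventually.of_forall fun t ht => ?_)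
  have h1 : 4 * t^2 ≤ a t := a_lb_sq ht.1 ht.2
  have h2 : a t ≤ 4 := a_le_four t
  have hat : 0 < a t := by nlinarith [mul_pos ht.1 ht.1]
  have hup : Real.log (a t) ≤ Real.log 4 := Real.log_le_log hat h2
  have hlo : Real.log 4 + 2 * Real.log t ≤ Real.log (a t) := by
    have he : Real.log (4 * t^2) = Real.log 4 + 2 * Real.log t := by
      rw [Real.log_mul (by norm_num) (pow_ne_zero 2 (ne_of_gt ht.1)), Real.log_pow]
      push_cast; ring
    rw [← he]
    exact Real.log_le_log (by nlinarith [mul_pos ht.1 ht.1]) h1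
  have hl4 : 0 ≤ Real.log 4 := Real.log_nonneg (by norm_num)
  simp only [Real.norm_eq_abs]
  rw [abs_le]
  constructor
  · have := neg_abs_le (Real.log t); linarith
  · have := le_abs_self (Real.log t); linarith [abs_nonneg (Real.log t)]

lemma a_symm (t : ℝ) : a (1 - t) = a t := by
  rw [a_eq, a_eq, show 2*Real.pi*(1-t) = 2*Real.pi - 2*Real.pi*t by ring, Real.cos_two_pi_sub]

lemma ii_la_half2 : IntervalIntegrable (fun t => Real.log (a t)) volume (1/2) 1 := by
  have h := ii_la_half.comp_sub_left 1
  have he : (fun x => Real.log (a (1 - x))) = fun x => Real.log (a x) :=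
    funext fun x => by rw [a_symm]
  rw [he] at h
  norm_num at h
  exact h.symm

lemma ii_la : IntervalIntegrable (fun t => Real.log (a t)) volume 0 1 :=
  ii_la_half.trans ii_la_half2

lemma half_int : ∫ t in (0:ℝ)..1, Real.log (a t)
    = 2 * ∫ t in (0:ℝ)..(1/2), Real.log (a t) := by
  have h1 := intervalIntegral.integral_add_adjacent_intervals ii_la_half ii_la_half2
  have h2 : ∫ t in (1/2:ℝ)..1, Real.log (a t) = ∫ t in (0:ℝ)..(1/2), Real.log (a t) := by
    have h3 := intervalIntegral.integral_comp_sub_left (a := (1/2:ℝ)) (b := 1)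
      (fun t => Real.log (a t)) 1
    norm_num at h3
    rw [← h3]
    congr 1
    funext x
    rw [a_symm]
  linarith



lemma la_lb1 {t : ℝ} (h0 : 0 < t) (h14 : t ≤ 1/4) :
    Real.log 4 + 2*Real.log Real.pi + 2*Real.log t - 6*t^2 ≤ Real.log (a t) := by
  set x := Real.pi * t with hx
  have hxpos : 0 < x := mul_pos Real.pi_pos h0
  have hu : x^2 ≤ 9.9226/16 := by
    rw [hx]; nlinarith [pi_sq_lt, sq_nonneg t, mul_pos h0 h0]
  have h1u : (0:ℝ) < 1 - x^2/4 := by nlinarith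
  have key := a_lb_low h0 h14
  have hy : 0 < x * (1 - x^2/4) := mul_pos hxpos h1u
  have hlog : Real.log (4 * (x*(1-x^2/4))^2) ≤ Real.log (a t) := by
    apply Real.log_le_log (by positivity) key
  have hdec : Real.log (4 * (x*(1-x^2/4))^2)
      = Real.log 4 + 2*Real.log Real.pi + 2*Real.log t + 2*Real.log (1-x^2/4) := by
    rw [Real.log_mul (by norm_num) (by positivity), Real.log_pow,
      Real.log_mul (ne_of_gt hxpos) (ne_of_gt h1u), hx,
      Real.log_mul (ne_of_gt Real.pi_pos) (ne_of_gt h0)]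
    push_cast; ring
  have hrem : -3*t^2 ≤ Real.log (1-x^2/4) := by
    have h5 : Real.log (1-x^2/4) = - Real.log ((1-x^2/4)⁻¹) := by
      rw [Real.log_inv]; ring
    have h6 : Real.log ((1-x^2/4)⁻¹) ≤ (1-x^2/4)⁻¹ - 1 :=
      Real.log_le_sub_one_of_pos (by positivity)
    have h7 : (1-x^2/4)⁻¹ - 1 ≤ 3*t^2 := by
      have he : (1-x^2/4)⁻¹ - 1 = (x^2/4) / (1-x^2/4) := by
        rw [eq_div_iff (ne_of_gt h1u), sub_mul, inv_mul_cancel₀ (ne_of_gt h1u)]; ring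
      rw [he, div_le_iff₀ h1u, hx]
      have hpt2 : (Real.pi*t)^2 ≤ 9.9226 * t^2 := by nlinarith [pi_sq_lt, sq_nonneg t]
      have hQ : t^2 ≤ 1/16 := by nlinarith
      nlinarith [hpt2, hQ, mul_le_mul_of_nonneg_left hpt2 (sq_nonneg t),
        mul_le_mul_of_nonneg_left hQ (sq_nonneg t)]
    linarith
  linarith [hlog, hdec ▸ hlog]

lemma intQ1 : ∫ t in (0:ℝ)..(1/4),
    (Real.log 4 + 2*Real.log Real.pi + 2*Real.log t - 6*t^2)
    = (1/2)*Real.log Real.pi - (1/2)*Real.log 2 - 17/32 := by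
  have l4 : Real.log 4 = 2*Real.log 2 := by
    rw [show (4:ℝ) = 2^2 by norm_num, Real.log_pow]; push_cast; ring
  have l14 : Real.log (1/4:ℝ) = -(2*Real.log 2) := by
    rw [show (1/4:ℝ) = 4⁻¹ by norm_num, Real.log_inv, l4]
  have h := intervalIntegral.integral_eq_sub_of_hasDerivAt_of_tendsto
    (f := fun t : ℝ => (Real.log 4 + 2*Real.log Real.pi)*t + 2*(t * Real.log t - t) - 2*t^3)
    (f' := fun t : ℝ => Real.log 4 + 2*Real.log Real.pi + 2*Real.log t - 6*t^2)
    (a := (0:ℝ)) (b := (1/4:ℝ))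
    (fa := (0:ℝ))
    (fb := (Real.log 4 + 2*Real.log Real.pi)*(1/4) + 2*((1/4) * Real.log (1/4) - 1/4) - 2*(1/4)^3)
    (by norm_num) ?_ ?_ ?_ ?_
  · rw [h, l4, l14]; ring
  · intro x hx
    have h1 : HasDerivAt (fun t : ℝ => (Real.log 4 + 2*Real.log Real.pi)*t)
        (Real.log 4 + 2*Real.log Real.pi) x := by
      simpa using (hasDerivAt_id x).const_mul (Real.log 4 + 2*Real.log Real.pi)
    have h2 : HasDerivAt (fun t : ℝ => t * Real.log t - t) (Real.log x) x := by
      exact ((Real.hasDerivAt_mul_log hx.1.ne').sub (hasDerivAt_id' x)).congr_deriv (by ring)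
    have h3 : HasDerivAt (fun t : ℝ => 2*t^3) (6*x^2) x := by
      have := (hasDerivAt_pow 3 x).const_mul (2:ℝ)
      simpa using this.congr_deriv (by push_cast; ring)
    exact (h1.add (h2.const_mul 2)).sub h3
  · -- integrability
    have hc : IntervalIntegrable (fun t : ℝ => Real.log 4 + 2*Real.log Real.pi - 6*t^2)
        volume 0 (1/4) := by
      apply Continuous.intervalIntegrable; continuity
    have hl : IntervalIntegrable (fun t : ℝ => 2 * Real.log t) volume 0 (1/4) :=
      (ii_log' le_rfl (by norm_num) (by norm_num)).const_mul 2
    have he : (fun t : ℝ => Real.log 4 + 2*Real.log Real.pi + 2*Real.log t - 6*t^2)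
        = (fun t : ℝ => (Real.log 4 + 2*Real.log Real.pi - 6*t^2) + 2*Real.log t) := by
      funext t; ring
    rw [he]
    exact hc.add hl
  · have h1 : Filter.Tendsto (fun t : ℝ => t * Real.log t) (nhdsWithin 0 (Set.Ioi 0)) (nhds 0) := by
      have := tendsto_log_mul_rpow_nhdsGT_zero (r := 1) one_pos
      simp only [Real.rpow_one] at this
      exact this.congr (fun x => mul_comm _ _)
    have hct : Continuous (fun t : ℝ => (Real.log 4 + 2*Real.log Real.pi)*t - t*2 - 2*t^3) :=
      ((continuous_const.mul continuous_id).sub (continuous_id.mul continuous_const)).sub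
        (continuous_const.mul (continuous_pow 3))
    have h2 : Filter.Tendsto (fun t : ℝ => (Real.log 4 + 2*Real.log Real.pi)*t - t*2 - 2*t^3)
        (nhdsWithin 0 (Set.Ioi 0)) (nhds 0) := by
      apply Filter.Tendsto.mono_left _ nhdsWithin_le_nhds
      simpa using hct.tendsto 0
    have h4 := h2.add (h1.const_mul 2)
    simp only [mul_zero, add_zero] at h4
    exact h4.congr (fun x => by ring)
  · apply Filter.Tendsto.mono_left _ nhdsWithin_le_nhds
    have hl : ContinuousAt Real.log (1/4:ℝ) := Real.continuousAt_log (by norm_num)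
    have c1 : ContinuousAt (fun t : ℝ => t * Real.log t - t) (1/4) :=
      (continuousAt_id.mul hl).sub continuousAt_id
    have c2 : ContinuousAt (fun t : ℝ => (Real.log 4 + 2*Real.log Real.pi)*t) (1/4) :=
      (continuous_const.mul continuous_id).continuousAt
    have c3 : ContinuousAt (fun t : ℝ => 2*t^3) (1/4) :=
      (continuous_const.mul (continuous_pow 3)).continuousAt
    exact (c2.add (c1.const_mul 2)).sub c3



lemma ii_g : IntervalIntegrable
    (fun t : ℝ => Real.log 4 + 2*Real.log Real.pi + 2*Real.log t - 6*t^2) volume 0 (1/4) := by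
  have hc : IntervalIntegrable (fun t : ℝ => Real.log 4 + 2*Real.log Real.pi - 6*t^2)
      volume 0 (1/4) := by apply Continuous.intervalIntegrable; continuity
  have hl : IntervalIntegrable (fun t : ℝ => 2 * Real.log t) volume 0 (1/4) :=
    (ii_log' le_rfl (by norm_num) (by norm_num)).const_mul 2
  have he : (fun t : ℝ => Real.log 4 + 2*Real.log Real.pi + 2*Real.log t - 6*t^2)
      = (fun t : ℝ => (Real.log 4 + 2*Real.log Real.pi - 6*t^2) + 2*Real.log t) := by
    funext t; ring
  rw [he]; exact hc.add hl

lemma ii_la_sub {c d : ℝ} (h0 : 0 ≤ c) (hcd : c ≤ d) (h1 : d ≤ 1/2) :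
    IntervalIntegrable (fun t => Real.log (a t)) volume c d :=
  ii_la_half.mono_set' (by
    rw [Set.uIoc_of_le hcd, Set.uIoc_of_le (by norm_num : (0:ℝ) ≤ 1/2)]
    exact Set.Ioc_subset_Ioc h0 h1)

lemma S_lb : Real.log Real.pi - (3/4)*Real.log 2 + (1/4)*Real.log (2+Real.sqrt 2) - 17/16
    ≤ ∫ t in (0:ℝ)..1, Real.log (a t) := by
  have i1 := ii_la_sub le_rfl (by norm_num : (0:ℝ) ≤ 1/4) (by norm_num)
  have i2 := ii_la_sub (by norm_num : (0:ℝ) ≤ 1/4) (by norm_num : (1/4:ℝ) ≤ 3/8) (by norm_num)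
  have i3 := ii_la_sub (by norm_num : (0:ℝ) ≤ 3/8) (by norm_num : (3/8:ℝ) ≤ 1/2) (by norm_num)
  have hs1 := intervalIntegral.integral_add_adjacent_intervals i1 i2
  have hs2 := intervalIntegral.integral_add_adjacent_intervals (i1.trans i2) i3
  -- piece 1
  have hp1 : (1/2)*Real.log Real.pi - (1/2)*Real.log 2 - 17/32
      ≤ ∫ t in (0:ℝ)..(1/4), Real.log (a t) := by
    rw [← intQ1]
    apply intervalIntegral.integral_mono_ae_restrict (by norm_num) ii_g i1
    have hne : ∀ᵐ (t:ℝ) ∂volume, t ≠ 0 := by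
      refine ae_iff.2 ?_
      have : {t : ℝ | ¬ t ≠ 0} = {0} := by ext t; simp
      rw [this]; exact measure_singleton 0
    have hne' : ∀ᵐ (t:ℝ) ∂(volume.restrict (Set.Icc (0:ℝ) (1/4))), t ≠ 0 :=
      hne.filter_mono (MeasureTheory.ae_mono Measure.restrict_le_self)
    filter_upwards [hne', ae_restrict_mem measurableSet_Icc] with t ht0 htm
    exact la_lb1 (lt_of_le_of_ne htm.1 (Ne.symm ht0)) htm.2
  -- piece 2
  have hp2 : (1/8) * Real.log 2 ≤ ∫ t in (1/4:ℝ)..(3/8), Real.log (a t) := by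
    have h := intervalIntegral.integral_mono_on (by norm_num : (1/4:ℝ) ≤ 3/8)
      (intervalIntegrable_const (c := Real.log 2)) i2
      (fun t ht => Real.log_le_log two_pos (a_lb_mid ht.1 (ht.2.trans (by norm_num))))
    rw [intervalIntegral.integral_const] at h
    calc (1/8) * Real.log 2 = ((3/8:ℝ) - 1/4) • Real.log 2 := by norm_num
      _ ≤ _ := h
  -- piece 3
  have hp3 : (1/8) * Real.log (2 + Real.sqrt 2) ≤ ∫ t in (3/8:ℝ)..(1/2), Real.log (a t) := by
    have h := intervalIntegral.integral_mono_on (by norm_num : (3/8:ℝ) ≤ 1/2)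
      (intervalIntegrable_const (c := Real.log (2 + Real.sqrt 2))) i3
      (fun t ht => Real.log_le_log (by positivity) (a_lb_hi ht.1 ht.2))
    rw [intervalIntegral.integral_const] at h
    calc (1/8) * Real.log (2 + Real.sqrt 2) = ((1/2:ℝ) - 3/8) • Real.log (2 + Real.sqrt 2) := by
          norm_num
      _ ≤ _ := h
  rw [half_int]
  linarith

lemma int_log_one_add_a_le : ∫ t in (0:ℝ)..1, Real.log (1 + a t) ≤ Real.log 3 := by
  have hpos : ∀ t : ℝ, (0:ℝ) < 1 + a t := fun t => by linarith [a_nonneg t]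
  have hcont : Continuous (fun t => Real.log (1 + a t)) :=
    (continuous_const.add cont_a).log (fun t => (hpos t).ne')
  have hcont2 : Continuous (fun t : ℝ => Real.log 3 - (2/3) * Real.cos (2*Real.pi*t)) := by
    continuity
  have hpt : ∀ t ∈ Set.Icc (0:ℝ) 1, Real.log (1 + a t)
      ≤ Real.log 3 - (2/3) * Real.cos (2*Real.pi*t) := by
    intro t _
    have h := Real.log_le_sub_one_of_pos (show (0:ℝ) < (1 + a t)/3 by linarith [a_nonneg t])
    rw [Real.log_div (hpos t).ne' (by norm_num)] at h
    rw [a_eq] at h ⊢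
    nlinarith [h]
  have hmono := intervalIntegral.integral_mono_on (by norm_num : (0:ℝ) ≤ 1)
    (hcont.intervalIntegrable (μ := volume) 0 1) (hcont2.intervalIntegrable (μ := volume) 0 1) hpt
  refine hmono.trans ?_
  have hii1 : IntervalIntegrable (fun _ : ℝ => Real.log 3) volume 0 1 := intervalIntegrable_const
  have hii2 : IntervalIntegrable (fun t : ℝ => 2/3 * Real.cos (2*Real.pi*t)) volume 0 1 :=
    Continuous.intervalIntegrable (by continuity) 0 1
  rw [intervalIntegral.integral_sub hii1 hii2,
    intervalIntegral.integral_const, intervalIntegral.integral_const_mul, int_cos]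
  simp

lemma log_lb_aux {x c : ℝ} (hc : 0 < c) (hx : 0 < x) :
    Real.log c + 1 - c/x ≤ Real.log x := by
  have h := Real.log_le_sub_one_of_pos (show 0 < c/x by positivity)
  rw [Real.log_div (ne_of_gt hc) (ne_of_gt hx)] at h
  linarith

lemma log_ub_aux {x c : ℝ} (hc : 0 < c) (hx : 0 < x) :
    Real.log x ≤ Real.log c + x/c - 1 := by
  have h := Real.log_le_sub_one_of_pos (show 0 < x/c by positivity)
  rw [Real.log_div (ne_of_gt hx) (ne_of_gt hc)] at h
  linarith

lemma numeric : Real.log (16/5) + 2*(Real.log 3 -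
      (Real.log Real.pi - (3/4)*Real.log 2 + (1/4)*Real.log (2+Real.sqrt 2) - 17/16))
    ≤ Real.log (8*(3+Real.sqrt 5)) := by
  have hs2 : (1.4142135:ℝ) ≤ Real.sqrt 2 := by
    have h := Real.sqrt_le_sqrt (show ((1.4142135:ℝ))^2 ≤ 2 by norm_num)
    rwa [Real.sqrt_sq (by norm_num)] at h
  have hs5 : (2.2360679:ℝ) ≤ Real.sqrt 5 := by
    have h := Real.sqrt_le_sqrt (show ((2.2360679:ℝ))^2 ≤ 5 by norm_num)
    rwa [Real.sqrt_sq (by norm_num)] at h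
  have hq2 : Real.sqrt 2 ^ 2 = 2 := Real.sq_sqrt (by norm_num)
  have hq5 : Real.sqrt 5 ^ 2 = 5 := Real.sq_sqrt (by norm_num)
  set L2 := Real.log 2 with hL2
  have h165 : Real.log (16/5) = 4*L2 - Real.log 5 := by
    rw [Real.log_div (by norm_num) (by norm_num), show (16:ℝ) = 2^4 by norm_num, Real.log_pow]
    push_cast; ring
  have h8 : Real.log (8*(3+Real.sqrt 5)) = 3*L2 + Real.log (3+Real.sqrt 5) := by
    rw [Real.log_mul (by norm_num) (by positivity), show (8:ℝ) = 2^3 by norm_num, Real.log_pow]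
    push_cast; ring
  have b2u : L2 ≤ 0.6931472 := by
    rw [hL2]; linarith [Real.log_two_lt_d9]
  have b2l : (0.6931471:ℝ) ≤ L2 := by
    rw [hL2]; linarith [Real.log_two_gt_d9]
  have b3 : 2*Real.log 3 ≤ 3*L2 + 1/8 := by
    have h9 : Real.log 9 = 2*Real.log 3 := by
      rw [show (9:ℝ) = 3^2 by norm_num, Real.log_pow]; push_cast; ring
    have h8' : Real.log 8 = 3*L2 := by
      rw [show (8:ℝ) = 2^3 by norm_num, Real.log_pow]; push_cast; ring
    have := log_ub_aux (show (0:ℝ) < 8 by norm_num) (show (0:ℝ) < 9 by norm_num)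
    rw [h9, h8'] at this
    linarith
  have b5 : (7/3)*L2 - 1/125 ≤ Real.log 5 := by
    have h125 : Real.log 125 = 3*Real.log 5 := by
      rw [show (125:ℝ) = 5^3 by norm_num, Real.log_pow]; push_cast; ring
    have h128 : Real.log 128 = 7*L2 := by
      rw [show (128:ℝ) = 2^7 by norm_num, Real.log_pow]; push_cast; ring
    have := log_lb_aux (show (0:ℝ) < 128 by norm_num) (show (0:ℝ) < 125 by norm_num)
    rw [h128] at this
    rw [h125] at this
    linarith [this]
  have bpi : (5/3)*L2 - 1/93 ≤ Real.log Real.pi := by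
    have hpi3 : (31:ℝ) ≤ Real.pi^3 := by
      nlinarith [Real.pi_gt_d6, Real.pi_pos, sq_nonneg (Real.pi - 3.141592)]
    have h1 : Real.log 31 ≤ Real.log (Real.pi^3) := Real.log_le_log (by norm_num) hpi3
    have h2 : Real.log (Real.pi^3) = 3*Real.log Real.pi := by
      rw [Real.log_pow]; push_cast; ring
    have h32 : Real.log 32 = 5*L2 := by
      rw [show (32:ℝ) = 2^5 by norm_num, Real.log_pow]; push_cast; ring
    have h3 := log_lb_aux (show (0:ℝ) < 32 by norm_num) (show (0:ℝ) < 31 by norm_num)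
    rw [h32] at h3
    have : (5:ℝ)*L2 + 1 - 32/31 ≤ 3*Real.log Real.pi := by
      calc (5:ℝ)*L2 + 1 - 32/31 ≤ Real.log 31 := h3
        _ ≤ Real.log (Real.pi^3) := h1
        _ = 3*Real.log Real.pi := h2
    linarith
  have bq : (7/4)*L2 + 0.014475 ≤ Real.log (2+Real.sqrt 2) := by
    have hX : (2+Real.sqrt 2)^4 = 68 + 48*Real.sqrt 2 := by
      linear_combination (Real.sqrt 2^2 + 8*Real.sqrt 2 + 26) * hq2
    have hXge : (135.882248:ℝ) ≤ (2+Real.sqrt 2)^4 := by rw [hX]; linarith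
    have hXpos : (0:ℝ) < (2+Real.sqrt 2)^4 := by positivity
    have h128 : Real.log 128 = 7*L2 := by
      rw [show (128:ℝ) = 2^7 by norm_num, Real.log_pow]; push_cast; ring
    have h1 := log_lb_aux (show (0:ℝ) < 128 by norm_num) hXpos
    rw [h128] at h1
    have h2 : Real.log ((2+Real.sqrt 2)^4) = 4*Real.log (2+Real.sqrt 2) := by
      rw [Real.log_pow]; push_cast; ring
    have h3 : (128:ℝ)/((2+Real.sqrt 2)^4) ≤ 0.9421 := by
      rw [div_le_iff₀ hXpos]; nlinarith
    rw [h2] at h1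
    linarith
  have bphi : (9/4)*L2 + 0.0797 ≤ Real.log (3+Real.sqrt 5) := by
    have hY : (3+Real.sqrt 5)^4 = 376 + 168*Real.sqrt 5 := by
      linear_combination (Real.sqrt 5^2 + 12*Real.sqrt 5 + 59) * hq5
    have hYge : (751.659:ℝ) ≤ (3+Real.sqrt 5)^4 := by rw [hY]; linarith
    have hYpos : (0:ℝ) < (3+Real.sqrt 5)^4 := by positivity
    have h512 : Real.log 512 = 9*L2 := by
      rw [show (512:ℝ) = 2^9 by norm_num, Real.log_pow]; push_cast; ring
    have h1 := log_lb_aux (show (0:ℝ) < 512 by norm_num) hYpos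
    rw [h512] at h1
    have h2 : Real.log ((3+Real.sqrt 5)^4) = 4*Real.log (3+Real.sqrt 5) := by
      rw [Real.log_pow]; push_cast; ring
    have h3 : (512:ℝ)/((3+Real.sqrt 5)^4) ≤ 0.6812 := by
      rw [div_le_iff₀ hYpos]; nlinarith
    rw [h2] at h1
    linarith
  rw [h165, h8]
  linarith



lemma cont_z : Continuous z :=
  Complex.continuous_exp.comp (continuous_const.mul Complex.continuous_ofReal)

lemma cont_absSum (n : ℕ) :
    Continuous (fun s => ‖∑ j ∈ Finset.range n, z s ^ j‖ ^ 2) :=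
  (continuous_norm.comp (continuous_finset_sum _ fun j _ => cont_z.pow j)).pow 2

lemma absSum_le (s : ℝ) (n : ℕ) :
    ‖∑ j ∈ Finset.range n, z s ^ j‖ ≤ (n:ℝ) := by
  calc ‖∑ j ∈ Finset.range n, z s ^ j‖
      ≤ ∑ j ∈ Finset.range n, ‖z s ^ j‖ := by
        exact norm_sum_le _ _
    _ = ∑ j ∈ Finset.range n, 1 := by
        apply Finset.sum_congr rfl; intro j _; rw [norm_pow, abs_z, one_pow]
    _ = (n:ℝ) := by simp

lemma ae_mem_Ioo : ∀ᵐ (t:ℝ) ∂(volume.restrict (Set.Icc (0:ℝ) 1)), t ∈ Set.Ioo (0:ℝ) 1 := by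
  have h0 : ∀ᵐ (t:ℝ) ∂volume, t ≠ 0 := by
    refine ae_iff.2 ?_
    have : {t : ℝ | ¬ t ≠ 0} = {0} := by ext t; simp
    rw [this]; exact measure_singleton 0
  have h1 : ∀ᵐ (t:ℝ) ∂volume, t ≠ 1 := by
    refine ae_iff.2 ?_
    have : {t : ℝ | ¬ t ≠ 1} = {1} := by ext t; simp
    rw [this]; exact measure_singleton 1
  have h0' : ∀ᵐ (t:ℝ) ∂(volume.restrict (Set.Icc (0:ℝ) 1)), t ≠ 0 :=
    h0.filter_mono (MeasureTheory.ae_mono Measure.restrict_le_self)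
  have h1' : ∀ᵐ (t:ℝ) ∂(volume.restrict (Set.Icc (0:ℝ) 1)), t ≠ 1 :=
    h1.filter_mono (MeasureTheory.ae_mono Measure.restrict_le_self)
  filter_upwards [h0', h1', ae_restrict_mem measurableSet_Icc] with t ht0 ht1 htm
  exact ⟨lt_of_le_of_ne htm.1 (Ne.symm ht0), lt_of_le_of_ne htm.2 ht1⟩


end Stmt14Aux

open Stmt14Aux MeasureTheory

/-- For every integer `m ≥ 1`,
`∫∫_{[0,1]²} log(3 + |1+z₀+⋯+z₀^{2m−1}|² + |1+z₁+⋯+z₁^{m²−1}|²) dt₀ dt₁ ≤ log(8(3+√5))`,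
where `z_j = e^{−2πi t_j}`; moreover `log(8(3+√5)) = 4 log 2 + log((3+√5)/2)`. -/
theorem stmt14 (m : ℕ) (hm : 1 ≤ m) :
    (∫ t₀ in (0:ℝ)..1, ∫ t₁ in (0:ℝ)..1,
      Real.log (3 +
        ‖∑ j ∈ Finset.range (2 * m),
          Complex.exp (-(2 * Real.pi * Complex.I) * (t₀ : ℂ)) ^ j‖ ^ 2 +
        ‖∑ j ∈ Finset.range (m ^ 2),
          Complex.exp (-(2 * Real.pi * Complex.I) * (t₁ : ℂ)) ^ j‖ ^ 2)) ≤
      Real.log (8 * (3 + Real.sqrt 5)) ∧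
    Real.log (8 * (3 + Real.sqrt 5)) =
      4 * Real.log 2 + Real.log ((3 + Real.sqrt 5) / 2) := by
  constructor
  case right =>
    rw [Real.log_mul (by norm_num) (by positivity),
      Real.log_div (by positivity) (by norm_num),
      show (8:ℝ) = 2^3 by norm_num, Real.log_pow]
    push_cast; ring
  case left =>
    show (∫ t₀ in (0:ℝ)..1, ∫ t₁ in (0:ℝ)..1,
        Real.log (3 + ‖∑ j ∈ Finset.range (2 * m), z t₀ ^ j‖ ^ 2 +
          ‖∑ j ∈ Finset.range (m ^ 2), z t₁ ^ j‖ ^ 2)) ≤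
        Real.log (8 * (3 + Real.sqrt 5))
    set A : ℝ → ℝ := fun s => ‖∑ j ∈ Finset.range (2 * m), z s ^ j‖ ^ 2 with hA
    set B : ℝ → ℝ := fun s => ‖∑ j ∈ Finset.range (m ^ 2), z s ^ j‖ ^ 2 with hB
    have hA0 : ∀ s, 0 ≤ A s := fun s => by rw [hA]; positivity
    have hB0 : ∀ s, 0 ≤ B s := fun s => by rw [hB]; positivity
    have hA4 : ∀ s ∈ Set.Ioo (0:ℝ) 1, A s ≤ 4 / a s := fun s hs => sum_sq_le hs (2*m)
    have hB4 : ∀ s ∈ Set.Ioo (0:ℝ) 1, B s ≤ 4 / a s := fun s hs => sum_sq_le hs (m^2)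
    have hAub : ∀ s, A s ≤ ((2*m : ℕ):ℝ)^2 := fun s => by
      rw [hA]
      have h := absSum_le s (2*m)
      have h0 := norm_nonneg (∑ j ∈ Finset.range (2*m), z s ^ j)
      exact pow_le_pow_left₀ h0 h 2
    have hBub : ∀ s, B s ≤ ((m^2 : ℕ):ℝ)^2 := fun s => by
      rw [hB]
      have h := absSum_le s (m^2)
      have h0 := norm_nonneg (∑ j ∈ Finset.range (m^2), z s ^ j)
      exact pow_le_pow_left₀ h0 h 2
    set C : ℝ := Real.log (3 + ((2*m : ℕ):ℝ)^2 + ((m^2 : ℕ):ℝ)^2) with hC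
    set φ : ℝ → ℝ := fun t => Real.log (1 + a t) - Real.log (a t) with hφ
    have hcont1 : Continuous (fun t => Real.log (1 + a t)) :=
      (continuous_const.add cont_a).log (fun t => by have := a_nonneg t; exact (show (0:ℝ) < 1 + a t by linarith).ne')
    have hφ_int : IntervalIntegrable φ volume 0 1 :=
      (hcont1.intervalIntegrable (μ := volume) 0 1).sub ii_la
    set V : ℝ := ∫ t in (0:ℝ)..1, φ t with hV
    set SLB : ℝ := Real.log Real.pi - (3/4)*Real.log 2 + (1/4)*Real.log (2+Real.sqrt 2) - 17/16
      with hSLB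
    have hVle : V ≤ Real.log 3 - SLB := by
      rw [hV, hφ, intervalIntegral.integral_sub (hcont1.intervalIntegrable (μ := volume) 0 1) ii_la]
      have h1 := int_log_one_add_a_le
      have h2 := S_lb
      rw [hSLB]; linarith
    -- pointwise key bound
    have hkey : ∀ s ∈ Set.Ioo (0:ℝ) 1, ∀ t ∈ Set.Ioo (0:ℝ) 1,
        Real.log (3 + A s + B t) ≤ Real.log (16/5) + φ s + φ t := by
      intro s hs t ht
      have := log_bound (a_pos hs) (a_le_four s) (a_pos ht) (a_le_four t)
        (hA0 s) (hA4 s hs) (hB0 t) (hB4 t ht)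
      rw [hφ]; dsimp only; linarith
    -- continuity of inner integrand
    have hcont_in : ∀ s, Continuous (fun t => Real.log (3 + A s + B t)) := by
      intro s
      apply Continuous.log
      · exact continuous_const.add (cont_absSum (m^2))
      · intro t
        have := hA0 s; have := hB0 t
        positivity
    -- inner bound
    have hinner : ∀ s ∈ Set.Ioo (0:ℝ) 1,
        (∫ t in (0:ℝ)..1, Real.log (3 + A s + B t)) ≤ Real.log (16/5) + V + φ s := by
      intro s hs
      have hle : (∫ t in (0:ℝ)..1, Real.log (3 + A s + B t))
          ≤ ∫ t in (0:ℝ)..1, ((Real.log (16/5) + φ s) + φ t) := by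
        apply intervalIntegral.integral_mono_ae_restrict (by norm_num)
          ((hcont_in s).intervalIntegrable (μ := volume) 0 1)
          ((intervalIntegrable_const).add hφ_int)
        filter_upwards [ae_mem_Ioo] with t ht
        have := hkey s hs t ht
        linarith
      have heval : (∫ t in (0:ℝ)..1, ((Real.log (16/5) + φ s) + φ t))
          = (Real.log (16/5) + φ s) + V := by
        rw [intervalIntegral.integral_add (intervalIntegrable_const) hφ_int,
          intervalIntegral.integral_const]
        rw [hV]; simp
      rw [heval] at hle
      linarith
    -- the outer function
    set F : ℝ → ℝ := fun s => ∫ t in (0:ℝ)..1, Real.log (3 + A s + B t) with hF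
    set G : ℝ → ℝ := fun x => ∫ t in (0:ℝ)..1, Real.log (3 + max x 0 + B t) with hG
    have hcont_G : ∀ x, Continuous (fun t => Real.log (3 + max x 0 + B t)) := by
      intro x
      apply Continuous.log
      · exact continuous_const.add (cont_absSum (m^2))
      · intro t
        have := hB0 t
        have : (0:ℝ) ≤ max x 0 := le_max_right x 0
        positivity
    have hGmono : Monotone G := by
      intro x y hxy
      rw [hG]
      apply intervalIntegral.integral_mono_on (by norm_num)
        ((hcont_G x).intervalIntegrable (μ := volume) 0 1)
        ((hcont_G y).intervalIntegrable (μ := volume) 0 1)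
      intro t _
      apply Real.log_le_log
      · have := hB0 t
        have : (0:ℝ) ≤ max x 0 := le_max_right x 0
        positivity
      · have : max x 0 ≤ max y 0 := max_le_max hxy le_rfl
        linarith
    have hGA : ∀ s, G (A s) = F s := by
      intro s
      rw [hG, hF]
      simp only [max_eq_left (hA0 s)]
    have hF_meas : Measurable F := by
      have heq : F = G ∘ (fun s => A s) := funext fun s => (hGA s).symm
      rw [heq]
      exact hGmono.measurable.comp (cont_absSum (2*m)).measurable
    have hFub : ∀ s, F s ≤ C := by
      intro s
      rw [hF, hC]
      calc (∫ t in (0:ℝ)..1, Real.log (3 + A s + B t))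
          ≤ ∫ t in (0:ℝ)..1, Real.log (3 + ((2*m : ℕ):ℝ)^2 + ((m^2 : ℕ):ℝ)^2) := by
            apply intervalIntegral.integral_mono_on (by norm_num)
              ((hcont_in s).intervalIntegrable (μ := volume) 0 1)
              (intervalIntegrable_const)
            intro t _
            apply Real.log_le_log
            · have := hA0 s; have := hB0 t; positivity
            · have := hAub s; have := hBub t; linarith
        _ = Real.log (3 + ((2*m : ℕ):ℝ)^2 + ((m^2 : ℕ):ℝ)^2) := by
            rw [intervalIntegral.integral_const]; simp
    have hFlb : ∀ s, 0 ≤ F s := by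
      intro s
      rw [hF]
      have h1 : (0:ℝ) ≤ ∫ t in (0:ℝ)..1, Real.log 3 := by
        rw [intervalIntegral.integral_const]
        simp [Real.log_nonneg (by norm_num : (1:ℝ) ≤ 3)]
      refine h1.trans ?_
      apply intervalIntegral.integral_mono_on (by norm_num)
        (intervalIntegrable_const)
        ((hcont_in s).intervalIntegrable (μ := volume) 0 1)
      intro t _
      apply Real.log_le_log (by norm_num)
      have := hA0 s; have := hB0 t; linarith
    have hC0 : 0 ≤ C := by
      rw [hC]; apply Real.log_nonneg; push_cast; nlinarith [sq_nonneg ((m:ℝ))]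
    have hF_int : IntervalIntegrable F volume 0 1 := by
      apply IntervalIntegrable.mono_fun' (g := fun _ => C)
        (intervalIntegrable_const) hF_meas.aestronglyMeasurable
      apply Filter.Eventually.of_forall
      intro s
      show ‖F s‖ ≤ C
      rw [Real.norm_eq_abs, _root_.abs_of_nonneg (hFlb s)]
      exact hFub s
    -- outer comparison
    have houter : (∫ s in (0:ℝ)..1, F s)
        ≤ ∫ s in (0:ℝ)..1, ((Real.log (16/5) + V) + φ s) := by
      apply intervalIntegral.integral_mono_ae_restrict (by norm_num) hF_int
        ((intervalIntegrable_const).add hφ_int)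
      filter_upwards [ae_mem_Ioo] with s hs
      have := hinner s hs
      rw [hF]; dsimp only; linarith
    have heval2 : (∫ s in (0:ℝ)..1, ((Real.log (16/5) + V) + φ s))
        = (Real.log (16/5) + V) + V := by
      rw [intervalIntegral.integral_add (intervalIntegrable_const) hφ_int,
        intervalIntegral.integral_const]
      rw [hV]; simp
    have hnum := numeric
    clear_value V SLB
    calc (∫ t₀ in (0:ℝ)..1, ∫ t₁ in (0:ℝ)..1,
        Real.log (3 + A t₀ + B t₁)) = ∫ s in (0:ℝ)..1, F s := by rw [hF]
      _ ≤ (Real.log (16/5) + V) + V := by rw [← heval2]; exact houter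
      _ ≤ Real.log (16/5) + 2*(Real.log 3 - SLB) := by linarith [hVle]
      _ ≤ Real.log (8*(3+Real.sqrt 5)) := by rw [hSLB]; exact hnum


end
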